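/- Let 𝕂 ∈ {ℝ, ℂ}, let σ : 𝕂 → 𝕂 be entire and not an affine-linear function (i.e. α_k ≠ 0 for some k ≥ 2 in its power series), and let D ⊆ 𝕂^d be open and bounded. Then for every fixed m ≥ 4, the closure in C⁰(D̄, 𝕂) of the restrictions to D̄ of Ñ₂ := ⋃_{L=1}^∞ R_{L,σ}(d+2, m, m, …, m) equals the closure of the restrictions to D̄ of the polynomials on 𝕂^d. -/

import Mathlib

open scoped BigOperators

/-- Residual blocks of a ResNet with internal width `d0` and block widths `Ds`. -/
def ResBlocks {𝕂 : Type} [RCLike 𝕂] (σ : 𝕂 → 𝕂) (d0 : ℕ) :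
    List ℕ → Set ((Fin d0 → 𝕂) → (Fin d0 → 𝕂))
  | [] => {f | f = id}
  | D :: Ds =>
    {f | ∃ (A : Matrix (Fin d0) (Fin D) 𝕂) (W : Matrix (Fin D) (Fin d0) 𝕂) (b : Fin D → 𝕂),
         ∃ g ∈ ResBlocks σ d0 Ds,
         f = fun z => g (z + A.mulVec fun i => σ (W.mulVec z i + b i))}

/-- The class `R_{L,σ}(d0, D_1, …, D_{L-1})` of functions `𝕂^d → 𝕂` computed by residual
networks, where `Ds = [D_1, …, D_{L-1}]`. -/
def ResNet {𝕂 : Type} [RCLike 𝕂] (σ : 𝕂 → 𝕂) (d d0 : ℕ) (Ds : List ℕ) :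
    Set ((Fin d → 𝕂) → 𝕂) :=
  {f | ∃ (A0 : Matrix (Fin d0) (Fin d) 𝕂) (b0 : Fin d0 → 𝕂) (AL : Fin d0 → 𝕂),
       ∃ h ∈ ResBlocks σ d0 Ds,
       f = fun z => ∑ i, AL i * h (A0.mulVec z + b0) i}

/-- The set of polynomial functions on `𝕂^d`. -/
def PolyFuns (𝕂 : Type) [RCLike 𝕂] (d : ℕ) : Set ((Fin d → 𝕂) → 𝕂) :=
  {f | ∃ p : MvPolynomial (Fin d) 𝕂, f = fun z => MvPolynomial.eval z p}

/-- The set of restrictions (as continuous maps on `K`) of functions in `S`. -/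
def restrictSet {𝕂 : Type} [RCLike 𝕂] {d : ℕ} (S : Set ((Fin d → 𝕂) → 𝕂))
    (K : Set (Fin d → 𝕂)) : Set C(K, 𝕂) :=
  {g | ∃ f ∈ S, ∀ z : K, g z = f (z : Fin d → 𝕂)}

open Filter Finset MvPolynomial

section Aux

open Filter Finset

variable {𝕂 : Type} [RCLike 𝕂]

/-- Norm-summability of an everywhere convergent power series at every radius. -/
lemma sum_norm_of_hasSum (α : ℕ → 𝕂) (σf : 𝕂 → 𝕂)
    (hσ : ∀ z : 𝕂, HasSum (fun k : ℕ => α k * z ^ k) (σf z)) :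
    ∀ r : ℝ, 0 ≤ r → Summable (fun k => ‖α k‖ * r ^ k) := by
  intro r hr
  set R : ℝ := 2 * r + 1 with hR
  have hRpos : 0 < R := by positivity
  have h2 : Summable (fun k => α k * ((R : ℝ) : 𝕂) ^ k) := (hσ _).summable
  have h3 : Tendsto (fun k => ‖α k * ((R : ℝ) : 𝕂) ^ k‖) atTop (nhds 0) := by
    simpa using h2.tendsto_atTop_zero.norm
  obtain ⟨C, hC⟩ := h3.bddAbove_range
  have hCmem : ∀ k, ‖α k‖ * R ^ k ≤ C := by
    intro k
    have := hC (Set.mem_range_self (f := fun k => ‖α k * ((R : ℝ) : 𝕂) ^ k‖) k)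
    simpa [norm_mul, norm_pow, RCLike.norm_ofReal, abs_of_pos hRpos] using this
  have hq1 : r / R < 1 := by
    rw [div_lt_one hRpos]; linarith
  have hq0 : 0 ≤ r / R := by positivity
  have hle : ∀ k, ‖α k‖ * r ^ k ≤ C * (r / R) ^ k := by
    intro k
    have heq : ‖α k‖ * r ^ k = (‖α k‖ * R ^ k) * (r / R) ^ k := by
      rw [mul_assoc, ← mul_pow]
      congr 2
      field_simp
    rw [heq]
    exact mul_le_mul_of_nonneg_right (hCmem k) (by positivity)
  have hge : Summable (fun k => C * (r / R) ^ k) :=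
    (summable_geometric_of_lt_one hq0 hq1).mul_left C
  exact Summable.of_nonneg_of_le (fun k => by positivity) hle hge

/-- Uniform tail estimate. -/
lemma tail_est (α : ℕ → 𝕂) (σf : 𝕂 → 𝕂)
    (hσ : ∀ z : 𝕂, HasSum (fun k : ℕ => α k * z ^ k) (σf z))
    (R : ℝ) (hR : 0 ≤ R) {ε : ℝ} (hε : 0 < ε) :
    ∃ N, ∀ w : 𝕂, ‖w‖ ≤ R →
      ‖σf w - ∑ k ∈ Finset.range N, α k * w ^ k‖ ≤ ε := by
  have hS : Summable (fun k => ‖α k‖ * R ^ k) := sum_norm_of_hasSum α σf hσ R hR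
  have htail : Tendsto (fun N => ∑' j, ‖α (j + N)‖ * R ^ (j + N)) atTop (nhds 0) := by
    have h1 : ∀ N, ∑' j, ‖α (j + N)‖ * R ^ (j + N)
        = (∑' k, ‖α k‖ * R ^ k) - ∑ k ∈ Finset.range N, ‖α k‖ * R ^ k := by
      intro N
      have := Summable.sum_add_tsum_nat_add (f := fun k => ‖α k‖ * R ^ k) N hS
      linarith
    simp only [h1]
    have h2 := Tendsto.sub (tendsto_const_nhds (x := ∑' k, ‖α k‖ * R ^ k))
      hS.hasSum.tendsto_sum_nat
    simpa using h2
  obtain ⟨N, hN⟩ := (Metric.tendsto_atTop.1 htail (ε/2) (by positivity))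
  refine ⟨N, fun w hw => ?_⟩
  have hsum := hσ w
  have hshift : HasSum (fun j => α (j + N) * w ^ (j + N))
      (σf w - ∑ k ∈ Finset.range N, α k * w ^ k) := by
    refine (hasSum_nat_add_iff (f := fun k => α k * w ^ k) N).2 ?_
    simpa using hsum
  rw [← hshift.tsum_eq]
  have hnorm : ∀ j, ‖α (j + N) * w ^ (j + N)‖ ≤ ‖α (j + N)‖ * R ^ (j + N) := by
    intro j
    rw [norm_mul, norm_pow]
    exact mul_le_mul_of_nonneg_left (pow_le_pow_left₀ (norm_nonneg _) hw _) (norm_nonneg _)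
  have hsum2 : Summable (fun j => ‖α (j + N)‖ * R ^ (j + N)) :=
    (summable_nat_add_iff (f := fun k => ‖α k‖ * R ^ k) N).2 hS
  have hsumn : Summable (fun j => ‖α (j + N) * w ^ (j + N)‖) :=
    hsum2.of_nonneg_of_le (fun _ => norm_nonneg _) hnorm
  calc ‖∑' j, α (j + N) * w ^ (j + N)‖
      ≤ ∑' j, ‖α (j + N) * w ^ (j + N)‖ := norm_tsum_le_tsum_norm hsumn
    _ ≤ ∑' j, ‖α (j + N)‖ * R ^ (j + N) := Summable.tsum_le_tsum hnorm hsumn hsum2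
    _ ≤ ε := by
        have := hN N (le_refl N)
        rw [Real.dist_eq] at this
        have h0 : 0 ≤ ∑' j, ‖α (j + N)‖ * R ^ (j + N) :=
          tsum_nonneg (fun j => by positivity)
        have := abs_lt.1 this
        linarith [this.2]

/-- σ is continuous. -/
lemma cont_of_hasSum (α : ℕ → 𝕂) (σf : 𝕂 → 𝕂)
    (hσ : ∀ z : 𝕂, HasSum (fun k : ℕ => α k * z ^ k) (σf z)) :
    Continuous σf := by
  rw [continuous_iff_continuousAt]
  intro z₀
  set R := ‖z₀‖ + 1 with hRdef
  have hR : 0 ≤ R := by positivity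
  have hS : Summable (fun k => ‖α k‖ * R ^ k) := sum_norm_of_hasSum α σf hσ R hR
  have hb : ∀ (n : ℕ), ∀ x ∈ Metric.ball z₀ 1, ‖α n * x ^ n‖ ≤ ‖α n‖ * R ^ n := by
    intro n x hx
    rw [norm_mul, norm_pow]
    refine mul_le_mul_of_nonneg_left (pow_le_pow_left₀ (norm_nonneg _) ?_ _) (norm_nonneg _)
    have hxz := mem_ball_iff_norm.1 hx
    calc ‖x‖ = ‖z₀ + (x - z₀)‖ := by ring_nf
      _ ≤ ‖z₀‖ + ‖x - z₀‖ := norm_add_le _ _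
      _ ≤ ‖z₀‖ + 1 := by linarith
  have h1 : TendstoUniformlyOn (fun t x => ∑ n ∈ t, α n * x ^ n)
      (fun x => ∑' n, α n * x ^ n) atTop (Metric.ball z₀ 1) :=
    tendstoUniformlyOn_tsum hS hb
  have h2 : ContinuousOn (fun x : 𝕂 => ∑' n, α n * x ^ n) (Metric.ball z₀ 1) := by
    apply h1.continuousOn
    apply Filter.Eventually.frequently
    filter_upwards with t
    exact continuousOn_finset_sum t (fun n _ => by fun_prop)
  have h3 : ContinuousOn σf (Metric.ball z₀ 1) := by
    apply h2.congr
    intro x _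
    exact ((hσ x).tsum_eq).symm
  exact h3.continuousAt (Metric.ball_mem_nhds z₀ one_pos)

/-- Identity theorem: everywhere-zero power series has zero coefficients. -/
lemma coeff_zero_of_hasSum_zero (γ : ℕ → 𝕂)
    (hsum : ∀ r : ℝ, 0 ≤ r → Summable fun k => ‖γ k‖ * r ^ k)
    (hzero : ∀ z : 𝕂, HasSum (fun k => γ k * z ^ k) 0) : ∀ k, γ k = 0 := by
  intro k
  induction k using Nat.strong_induction_on with
  | _ n ih =>
    set D : ℝ := ∑' j, ‖γ (j + (n+1))‖ * (1:ℝ) ^ (j + (n+1)) with hDdef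
    have hD1 : Summable (fun k => ‖γ k‖ * (1:ℝ) ^ k) := hsum 1 zero_le_one
    have hDs : Summable (fun j => ‖γ (j + (n+1))‖ * (1:ℝ) ^ (j + (n+1))) :=
      (summable_nat_add_iff (f := fun k => ‖γ k‖ * (1:ℝ) ^ k) (n+1)).2 hD1
    have hD0 : 0 ≤ D := tsum_nonneg (fun j => by positivity)
    have key : ∀ t : ℝ, 0 < t → t ≤ 1 → ‖γ n‖ ≤ t * D := by
      intro t ht ht1
      set z : 𝕂 := ((t : ℝ) : 𝕂) with hz
      have hznorm : ‖z‖ = t := by rw [hz, RCLike.norm_ofReal, abs_of_pos ht]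
      have hzne : z ≠ 0 := by
        intro h
        rw [h] at hznorm; simp at hznorm; linarith
      have h0 := hzero z
      have hshift : HasSum (fun j => γ (j + n) * z ^ (j + n)) 0 := by
        refine (hasSum_nat_add_iff (f := fun k => γ k * z ^ k) n).2 ?_
        have hz0 : ∑ i ∈ Finset.range n, γ i * z ^ i = 0 := by
          apply Finset.sum_eq_zero
          intro i hi
          rw [ih i (Finset.mem_range.1 hi)]
          ring
        simpa [hz0] using h0
      have hshift2 : HasSum (fun j => γ (j + 1 + n) * z ^ (j + 1 + n))
          (0 - γ n * z ^ n) := by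
        refine (hasSum_nat_add_iff (f := fun j => γ (j + n) * z ^ (j + n)) 1).2 ?_
        simpa using hshift
      have heq : γ n * z ^ n = - ∑' j, γ (j + 1 + n) * z ^ (j + 1 + n) := by
        rw [hshift2.tsum_eq]; ring
      have hb : ∀ j, ‖γ (j + 1 + n) * z ^ (j + 1 + n)‖
          ≤ (‖γ (j + (n+1))‖ * 1 ^ (j + (n+1))) * (t ^ n * t) := by
        intro j
        have hje : j + 1 + n = j + (n + 1) := by ring
        rw [hje, norm_mul, norm_pow, hznorm, one_pow, mul_one]
        refine mul_le_mul_of_nonneg_left ?_ (norm_nonneg _)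
        calc t ^ (j + (n+1)) = t ^ j * t ^ n * t := by ring
          _ ≤ 1 * (t ^ n * t) := by
              have h1 : t ^ j ≤ 1 := pow_le_one₀ (le_of_lt ht) ht1
              have h2 : (0:ℝ) ≤ t ^ n * t := by positivity
              nlinarith
          _ = t ^ n * t := by ring
      have hsum3 : Summable (fun j => ‖γ (j + 1 + n) * z ^ (j + 1 + n)‖) := by
        apply Summable.of_nonneg_of_le (fun _ => norm_nonneg _) hb
        exact hDs.mul_right _
      have hnorm : ‖γ n‖ * t ^ n ≤ D * (t ^ n * t) := by
        calc ‖γ n‖ * t ^ n = ‖γ n * z ^ n‖ := by rw [norm_mul, norm_pow, hznorm]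
          _ = ‖∑' j, γ (j + 1 + n) * z ^ (j + 1 + n)‖ := by rw [heq, norm_neg]
          _ ≤ ∑' j, ‖γ (j + 1 + n) * z ^ (j + 1 + n)‖ :=
              norm_tsum_le_tsum_norm hsum3
          _ ≤ ∑' j, (‖γ (j + (n+1))‖ * 1 ^ (j + (n+1))) * (t ^ n * t) :=
              Summable.tsum_le_tsum hb hsum3 (hDs.mul_right _)
          _ = D * (t ^ n * t) := by rw [tsum_mul_right]
      have htn : 0 < t ^ n := by positivity
      refine le_of_mul_le_mul_right ?_ htn
      nlinarith
    by_contra hne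
    have hpos : 0 < ‖γ n‖ := norm_pos_iff.2 hne
    set t := min 1 (‖γ n‖ / (2 * (D + 1))) with htdef
    have ht0 : 0 < t := lt_min one_pos (by positivity)
    have ht1 : t ≤ 1 := min_le_left _ _
    have hk := key t ht0 ht1
    have h2 : t * D ≤ (‖γ n‖ / (2 * (D + 1))) * D :=
      mul_le_mul_of_nonneg_right (min_le_right _ _) hD0
    have h3 : (‖γ n‖ / (2 * (D + 1))) * D < ‖γ n‖ := by
      rw [div_mul_eq_mul_div, div_lt_iff₀ (by positivity)]
      nlinarith
    linarith

/-- There is a point where the "second Taylor coefficient" is nonzero, with a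
quantitative third-order estimate for the symmetric second difference. -/
lemma exists_second_order (α : ℕ → 𝕂) (σf : 𝕂 → 𝕂)
    (hσ : ∀ z : 𝕂, HasSum (fun k : ℕ => α k * z ^ k) (σf z))
    (hna : ∃ k : ℕ, 2 ≤ k ∧ α k ≠ 0) :
    ∃ (a s : 𝕂) (C₀ : ℝ), s ≠ 0 ∧ 0 ≤ C₀ ∧
      ∀ w : 𝕂, ‖w‖ ≤ 1 →
        ‖σf (a + w) + σf (a - w) - 2 * σf a - s * w ^ 2‖ ≤ C₀ * ‖w‖ ^ 3 := by
  classical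
  set β : ℕ → 𝕂 := fun j => (((j+2).choose 2 : ℕ) : 𝕂) * α (j+2) with hβ
  -- summability of β at all radii
  have hβsum : ∀ r : ℝ, 0 ≤ r → Summable fun j => ‖β j‖ * r ^ j := by
    intro r hr
    set ρ : ℝ := 4 * (r + 1) with hρ
    have hρ0 : 0 ≤ ρ := by positivity
    have hα := sum_norm_of_hasSum α σf hσ ρ hρ0
    have hαs : Summable (fun j => ‖α (j+2)‖ * ρ ^ (j+2)) :=
      (summable_nat_add_iff (f := fun k => ‖α k‖ * ρ ^ k) 2).2 hα
    refine Summable.of_nonneg_of_le (fun j => by positivity) (fun j => ?_) hαs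
    have hc : ((j+2).choose 2 : ℝ) ≤ (4:ℝ) ^ (j+2) := by
      have h1 : (j+2).choose 2 ≤ (j+2)^2 := by
        calc (j+2).choose 2 ≤ (j+2) * (j+2-1) / 2 := by rw [Nat.choose_two_right]
          _ ≤ (j+2)^2 := by
              have : (j+2) * (j+2-1) ≤ (j+2)*(j+2) := by
                apply Nat.mul_le_mul_left; omega
              calc (j+2) * (j+2-1) / 2 ≤ (j+2)*(j+2) / 2 := Nat.div_le_div_right this
                _ ≤ (j+2)*(j+2) := Nat.div_le_self _ _
                _ = (j+2)^2 := by ring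
      have h2 : (j+2)^2 ≤ 4^(j+2) := by
        have := Nat.lt_two_pow_self (n := j+2)
        calc (j+2)^2 ≤ (2^(j+2))^2 := Nat.pow_le_pow_left (le_of_lt this) 2
          _ = 4^(j+2) := by
              rw [← pow_mul, mul_comm (j+2) 2, pow_mul]
              norm_num
      calc ((j+2).choose 2 : ℝ) ≤ ((4:ℕ)^(j+2) : ℕ) := by exact_mod_cast h1.trans h2
        _ = (4:ℝ) ^ (j+2) := by push_cast; ring
    have hβn : ‖β j‖ = ((j+2).choose 2 : ℝ) * ‖α (j+2)‖ := by
      rw [hβ]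
      simp [norm_mul]
    rw [hβn]
    have hr1 : r ^ j ≤ (r+1) ^ (j+2) := by
      calc r ^ j ≤ (r+1) ^ j := pow_le_pow_left₀ hr (by linarith) _
        _ ≤ (r+1) ^ (j+2) := pow_le_pow_right₀ (by linarith) (by omega)
    calc ((j+2).choose 2 : ℝ) * ‖α (j+2)‖ * r ^ j
        ≤ (4:ℝ)^(j+2) * ‖α (j+2)‖ * (r+1) ^ (j+2) := by
          apply mul_le_mul (mul_le_mul_of_nonneg_right hc (norm_nonneg _)) hr1
            (by positivity) (by positivity)
      _ = ‖α (j+2)‖ * ρ ^ (j+2) := by rw [hρ, mul_pow]; ring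
  -- F a := ∑' β j a^j has a point of non-vanishing
  have hFhas : ∀ a : 𝕂, HasSum (fun j => β j * a ^ j) (∑' j, β j * a ^ j) := by
    intro a
    refine (Summable.of_norm ?_).hasSum
    have h2 := hβsum ‖a‖ (norm_nonneg a)
    exact h2.congr (fun j => by simp [norm_mul, norm_pow])
  have hex : ∃ a : 𝕂, (∑' j, β j * a ^ j) ≠ 0 := by
    by_contra hcon
    push_neg at hcon
    have hz : ∀ a : 𝕂, HasSum (fun j => β j * a ^ j) 0 := by
      intro a; have := hFhas a; rwa [hcon a] at this
    have hβ0 := coeff_zero_of_hasSum_zero β hβsum hz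
    obtain ⟨k, hk2, hkne⟩ := hna
    have := hβ0 (k - 2)
    rw [hβ] at this
    simp only at this
    have hke : k - 2 + 2 = k := by omega
    rw [hke] at this
    rcases mul_eq_zero.1 this with h | h
    · have hcpos : 0 < k.choose 2 := Nat.choose_pos hk2
      have hcne : ((k.choose 2 : ℕ) : 𝕂) ≠ 0 := Nat.cast_ne_zero.2 (by omega)
      exact hcne h
    · exact hkne h
  obtain ⟨a, hFa⟩ := hex
  refine ⟨a, 2 * ∑' j, β j * a ^ j, 2 * ∑' k, ‖α k‖ * (‖a‖ + 1) ^ k,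
    by simp [hFa], by
      have h0 : 0 ≤ ∑' k, ‖α k‖ * (‖a‖ + 1) ^ k := tsum_nonneg (fun k => by positivity)
      linarith, ?_⟩
  intro w hw
  set s : 𝕂 := 2 * ∑' j, β j * a ^ j with hs
  -- the k-th "remainder" term
  set G : ℕ → 𝕂 := fun k =>
    (a + w)^k + (a - w)^k - 2 * a^k - 2 * ((k.choose 2 : ℕ) : 𝕂) * a^(k-2) * w^2 with hG
  -- Step 1: HasSum (α k * G k) to the quantity of interest
  have h4 : HasSum (fun k => α k * (2 * ((k.choose 2 : ℕ) : 𝕂) * a^(k-2) * w^2))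
      (s * w^2) := by
    have h1 : HasSum (fun j => β j * a ^ j * (2 * w^2)) ((∑' j, β j * a ^ j) * (2 * w^2)) :=
      (hFhas a).mul_right _
    have h2 : HasSum (fun j => α (j+2) * (2 * (((j+2).choose 2 : ℕ) : 𝕂) * a^(j+2-2) * w^2))
        ((∑' j, β j * a ^ j) * (2 * w^2)) := by
      refine h1.congr_fun (fun j => ?_)
      rw [hβ]
      simp only [Nat.add_sub_cancel]
      ring
    have h3 := (hasSum_nat_add_iff
      (f := fun k => α k * (2 * ((k.choose 2 : ℕ) : 𝕂) * a^(k-2) * w^2)) 2).1 h2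
    have : ∑ i ∈ Finset.range 2, α i * (2 * ((i.choose 2 : ℕ) : 𝕂) * a^(i-2) * w^2) = 0 := by
      simp [Finset.sum_range_succ]
    rw [this, add_zero] at h3
    have hse : s * w ^ 2 = (∑' j, β j * a ^ j) * (2 * w ^ 2) := by rw [hs]; ring
    rwa [hse]
  have hstep1 : HasSum (fun k => α k * G k)
      (σf (a + w) + σf (a - w) - 2 * σf a - s * w ^ 2) := by
    have hA := (hσ (a+w)).add (hσ (a-w))
    have hB := hA.sub ((hσ a).mul_left 2)
    have hC := hB.sub h4
    refine hC.congr_fun (fun k => ?_)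
    rw [hG]
    ring
  -- Step 2: pointwise bound on G k
  have hGbound : ∀ k, ‖G k‖ ≤ 2 * (‖a‖ + 1) ^ k * ‖w‖ ^ 3 := by
    intro k
    rcases Nat.lt_or_ge k 2 with hk | hk
    · interval_cases k
      · have h0 : G 0 = 0 := by norm_num [hG]
        rw [h0, norm_zero]; positivity
      · have h0 : G 1 = 0 := by norm_num [hG]; ring
        rw [h0, norm_zero]; positivity
    · -- k ≥ 2
      set e : ℕ → 𝕂 := fun j => if j ≤ 2 then 0 else (w^j + (-w)^j) * a^(k-j) * ((k.choose j : ℕ) : 𝕂) with he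
      have hGe : G k = ∑ j ∈ range (k+1), e j := by
        have hpow1 : (a + w)^k = ∑ j ∈ range (k+1), w^j * a^(k-j) * ((k.choose j : ℕ) : 𝕂) := by
          rw [add_comm a w]; exact add_pow w a k
        have hpow2 : (a - w)^k = ∑ j ∈ range (k+1), (-w)^j * a^(k-j) * ((k.choose j : ℕ) : 𝕂) := by
          have : a - w = -w + a := by ring
          rw [this]; exact add_pow (-w) a k
        have hD : ∀ j, w^j * a^(k-j) * ((k.choose j : ℕ) : 𝕂)
            + (-w)^j * a^(k-j) * ((k.choose j : ℕ) : 𝕂)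
            = e j + (if j ≤ 2 then (w^j + (-w)^j) * a^(k-j) * ((k.choose j : ℕ) : 𝕂) else 0) := by
          intro j
          rw [he]
          by_cases hj : j ≤ 2 <;> simp [hj] <;> ring
        have hsplit : ∑ j ∈ range (k+1),
            (if j ≤ 2 then (w^j + (-w)^j) * a^(k-j) * ((k.choose j : ℕ) : 𝕂) else 0)
            = 2 * a^k + 2 * ((k.choose 2 : ℕ) : 𝕂) * a^(k-2) * w^2 := by
          rw [← Finset.sum_subset (Finset.range_subset_range.2 (by omega : 3 ≤ k + 1))
            (fun j _ hj => by
              have : ¬ j ≤ 2 := by simp at hj; omega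
              simp [this])]
          rw [Finset.sum_range_succ, Finset.sum_range_succ, Finset.sum_range_succ,
            Finset.sum_range_zero]
          norm_num
          ring
        rw [hG]
        simp only [hpow1, hpow2, ← Finset.sum_add_distrib.symm]
        rw [← Finset.sum_add_distrib]
        simp only [hD]
        rw [Finset.sum_add_distrib, hsplit]
        ring
      rw [hGe]
      calc ‖∑ j ∈ range (k+1), e j‖ ≤ ∑ j ∈ range (k+1), ‖e j‖ := norm_sum_le _ _
        _ ≤ ∑ j ∈ range (k+1), ((k.choose j : ℕ) : ℝ) * ‖a‖^(k-j) * (2 * ‖w‖^3) := by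
            apply Finset.sum_le_sum
            intro j _
            rw [he]
            by_cases hj : j ≤ 2
            · simp [hj]; positivity
            · simp only [hj, if_false]
              have hj3 : 3 ≤ j := by omega
              calc ‖(w^j + (-w)^j) * a^(k-j) * ((k.choose j : ℕ) : 𝕂)‖
                  = ‖w^j + (-w)^j‖ * ‖a‖^(k-j) * ((k.choose j : ℕ) : ℝ) := by
                    rw [norm_mul, norm_mul, norm_pow]
                    congr 1
                    simp [RCLike.norm_natCast]
                _ ≤ (2 * ‖w‖^3) * ‖a‖^(k-j) * ((k.choose j : ℕ) : ℝ) := by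
                    have h1 : ‖w^j + (-w)^j‖ ≤ 2 * ‖w‖^j := by
                      calc ‖w^j + (-w)^j‖ ≤ ‖w^j‖ + ‖(-w)^j‖ := norm_add_le _ _
                        _ = 2 * ‖w‖^j := by rw [norm_pow, norm_pow, norm_neg]; ring
                    have h2 : ‖w‖^j ≤ ‖w‖^3 := pow_le_pow_of_le_one (norm_nonneg _) hw hj3
                    have : ‖w^j + (-w)^j‖ ≤ 2 * ‖w‖^3 := h1.trans (by linarith)
                    apply mul_le_mul_of_nonneg_right
                      (mul_le_mul_of_nonneg_right this (by positivity)) (by positivity)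
                _ = ((k.choose j : ℕ) : ℝ) * ‖a‖^(k-j) * (2 * ‖w‖^3) := by ring
        _ = (∑ j ∈ range (k+1), ‖a‖^(k-j) * ((k.choose j : ℕ) : ℝ)) * (2 * ‖w‖^3) := by
            rw [Finset.sum_mul]
            apply Finset.sum_congr rfl
            intro j _
            ring
        _ ≤ 2 * (‖a‖ + 1) ^ k * ‖w‖ ^ 3 := by
            have hbinom : ∑ j ∈ range (k+1), ‖a‖^(k-j) * ((k.choose j : ℕ) : ℝ)
                = (1 + ‖a‖) ^ k := by
              rw [add_pow 1 ‖a‖ k]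
              apply Finset.sum_congr rfl
              intro j _
              rw [one_pow]
              ring
            rw [hbinom]
            apply le_of_eq
            ring
  -- Step 3: assemble
  have hb : ∀ k, ‖α k * G k‖ ≤ ‖α k‖ * (‖a‖ + 1) ^ k * (2 * ‖w‖ ^ 3) := by
    intro k
    rw [norm_mul]
    calc ‖α k‖ * ‖G k‖ ≤ ‖α k‖ * (2 * (‖a‖ + 1) ^ k * ‖w‖ ^ 3) :=
        mul_le_mul_of_nonneg_left (hGbound k) (norm_nonneg _)
      _ = ‖α k‖ * (‖a‖ + 1) ^ k * (2 * ‖w‖ ^ 3) := by ring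
  have hsumb : Summable (fun k => ‖α k‖ * (‖a‖ + 1) ^ k * (2 * ‖w‖ ^ 3)) :=
    (sum_norm_of_hasSum α σf hσ (‖a‖ + 1) (by positivity)).mul_right _
  have hsumn : Summable (fun k => ‖α k * G k‖) :=
    hsumb.of_nonneg_of_le (fun _ => norm_nonneg _) hb
  rw [← hstep1.tsum_eq]
  calc ‖∑' k, α k * G k‖ ≤ ∑' k, ‖α k * G k‖ := norm_tsum_le_tsum_norm hsumn
    _ ≤ ∑' k, ‖α k‖ * (‖a‖ + 1) ^ k * (2 * ‖w‖ ^ 3) := Summable.tsum_le_tsum hb hsumn hsumb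
    _ = (2 * ∑' k, ‖α k‖ * (‖a‖ + 1) ^ k) * ‖w‖ ^ 3 := by
        rw [tsum_mul_right]
        ring


open Finset

variable {𝕂 : Type} [RCLike 𝕂]

/-- A single ideal "square move": adds `c * (⟨v,x⟩ + v0)^2` to coordinate `r`. -/
structure IMove (𝕂 : Type) (n : ℕ) where
  c : 𝕂
  v : Fin n → 𝕂
  v0 : 𝕂
  r : Fin n

namespace IMove

def lin {n : ℕ} (v : Fin n → 𝕂) (v0 : 𝕂) (x : Fin n → 𝕂) : 𝕂 := ∑ i, v i * x i + v0

def step {n : ℕ} (mv : IMove 𝕂 n) (x : Fin n → 𝕂) : Fin n → 𝕂 :=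
  fun j => x j + if j = mv.r then mv.c * (lin mv.v mv.v0 x) ^ 2 else 0

def net {n : ℕ} (L : List (IMove 𝕂 n)) (x : Fin n → 𝕂) : Fin n → 𝕂 :=
  L.foldl (fun y mv => step mv y) x

@[simp] lemma net_nil {n : ℕ} (x : Fin n → 𝕂) : net ([] : List (IMove 𝕂 n)) x = x := rfl

@[simp] lemma net_cons {n : ℕ} (mv : IMove 𝕂 n) (L : List (IMove 𝕂 n)) (x : Fin n → 𝕂) :
    net (mv :: L) x = net L (step mv x) := rfl

lemma net_append {n : ℕ} (L₁ L₂ : List (IMove 𝕂 n)) (x : Fin n → 𝕂) :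
    net (L₁ ++ L₂) x = net L₂ (net L₁ x) := by
  simp [net, List.foldl_append]

lemma lin_single {n : ℕ} (a : Fin n) (x : Fin n → 𝕂) :
    lin (Pi.single a 1) 0 x = x a := by
  simp [lin, Pi.single_apply, ite_mul]

lemma lin_pair {n : ℕ} (a b : Fin n) (x : Fin n → 𝕂) :
    lin (Pi.single a 1 + Pi.single b 1) 0 x = x a + x b := by
  simp [lin, Pi.single_apply, ite_mul, add_mul, Finset.sum_add_distrib]

end IMove

open IMove MvPolynomial

/-- Adding `t` to coordinate `r`. -/
def addTo {n : ℕ} (r : Fin n) (t : 𝕂) (x : Fin n → 𝕂) : Fin n → 𝕂 :=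
  fun j => x j + if j = r then t else 0

@[simp] lemma addTo_self {n : ℕ} (r : Fin n) (t : 𝕂) (x : Fin n → 𝕂) :
    addTo r t x r = x r + t := by simp [addTo]

@[simp] lemma addTo_ne {n : ℕ} {r j : Fin n} (h : j ≠ r) (t : 𝕂) (x : Fin n → 𝕂) :
    addTo r t x j = x j := by simp [addTo, h]

variable {d : ℕ}

def iE (i : Fin d) : Fin (d + 2) := Fin.castAdd 2 i

def proj (x : Fin (d + 2) → 𝕂) : Fin d → 𝕂 := fun i => x (iE i)

lemma iE_ne {i : Fin d} {r : Fin (d + 2)} (hr : d ≤ (r : ℕ)) : iE i ≠ r := by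
  intro h
  have h1 : ((iE i : Fin (d+2)) : ℕ) = (i : ℕ) := rfl
  have h2 := i.isLt
  rw [← h] at hr
  rw [h1] at hr
  omega

lemma proj_addTo {r : Fin (d + 2)} (hr : d ≤ (r : ℕ)) (t : 𝕂) (x : Fin (d + 2) → 𝕂) :
    proj (addTo r t x) = proj x := by
  funext i
  simp [proj, addTo_ne (iE_ne hr)]

/-- The main exact-representation theorem: every polynomial can be added to a high
coordinate by a sequence of ideal square moves. -/
theorem ideal_rep (p : MvPolynomial (Fin d) 𝕂) :
    ∀ (c : 𝕂) (r : Fin (d + 2)), d ≤ (r : ℕ) →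
    ∃ L : List (IMove 𝕂 (d + 2)),
      ∀ x : Fin (d + 2) → 𝕂, net L x = addTo r (c * eval (proj x) p) x := by
  induction p using MvPolynomial.induction_on with
  | C a =>
    intro c r _
    refine ⟨[⟨c * a, 0, 1, r⟩], fun x => ?_⟩
    funext j
    simp [net, step, addTo, lin, eval_C]
  | add p q ihp ihq =>
    intro c r hr
    obtain ⟨Lp, hLp⟩ := ihp c r hr
    obtain ⟨Lq, hLq⟩ := ihq c r hr
    refine ⟨Lp ++ Lq, fun x => ?_⟩
    rw [net_append, hLp, hLq, proj_addTo hr]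
    funext j
    by_cases hj : j = r
    · subst hj
      simp [addTo, eval_add]
      ring
    · simp [addTo_ne hj]
  | mul_X p i ihp =>
    intro c r hr
    -- the other working coordinate
    have hrval : (r : ℕ) = d ∨ (r : ℕ) = d + 1 := by
      have := r.isLt; omega
    set r' : Fin (d+2) := if (r : ℕ) = d then ⟨d+1, by omega⟩ else ⟨d, by omega⟩ with hr'def
    have hr' : d ≤ (r' : ℕ) := by
      rcases hrval with h | h <;> simp [hr'def, h]
    have hne : r' ≠ r := by
      rcases hrval with h | h
      · simp only [hr'def, h, if_pos rfl]
        intro hc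
        have := congrArg (fun z : Fin (d+2) => (z : ℕ)) hc
        simp [h] at this
      · have hd : ¬ ((r : ℕ) = d) := by omega
        simp only [hr'def, if_neg hd]
        intro hc
        have := congrArg (fun z : Fin (d+2) => (z : ℕ)) hc
        simp [h] at this
    obtain ⟨L₁, hL₁⟩ := ihp 1 r' hr'
    obtain ⟨L₂, hL₂⟩ := ihp (-1) r' hr'
    -- polarization moves
    set P1 : IMove 𝕂 (d+2) := ⟨c/2, Pi.single r' 1 + Pi.single (iE i) 1, 0, r⟩
    set P2 : IMove 𝕂 (d+2) := ⟨-(c/2), Pi.single r' 1, 0, r⟩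
    set P3 : IMove 𝕂 (d+2) := ⟨-(c/2), Pi.single (iE i) 1, 0, r⟩
    set Q1 : IMove 𝕂 (d+2) := ⟨-(c/2), Pi.single r' 1 + Pi.single (iE i) 1, 0, r⟩
    set Q2 : IMove 𝕂 (d+2) := ⟨c/2, Pi.single r' 1, 0, r⟩
    set Q3 : IMove 𝕂 (d+2) := ⟨c/2, Pi.single (iE i) 1, 0, r⟩
    refine ⟨L₁ ++ ([P1, P2, P3] ++ (L₂ ++ [Q1, Q2, Q3])), fun x => ?_⟩
    have hiEr : iE i ≠ r := iE_ne hr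
    have hiEr' : iE i ≠ r' := iE_ne hr'
    set F : 𝕂 := eval (proj x) p with hF
    set Z : 𝕂 := x (iE i) with hZ
    set W : 𝕂 := x r' with hW
    -- step through the list
    rw [net_append, hL₁]
    set x1 : Fin (d+2) → 𝕂 := addTo r' (1 * F) x with hx1
    have hx1r' : x1 r' = W + F := by rw [hx1]; simp [hW]
    have hx1Z : x1 (iE i) = Z := by rw [hx1]; simp [addTo_ne hiEr', hZ]
    have hx1proj : proj x1 = proj x := proj_addTo hr' _ _
    simp only [List.cons_append, net_cons, net_nil]
    -- apply P1 P2 P3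
    have hstep1 : step P1 x1 = addTo r ((c/2) * (W + F + Z)^2) x1 := by
      funext j
      simp only [step, addTo, P1, lin_pair, hx1r', hx1Z]
    set x2 := addTo r ((c/2) * (W + F + Z)^2) x1 with hx2
    have hx2r' : x2 r' = W + F := by rw [hx2]; rw [addTo_ne hne]; exact hx1r'
    have hx2Z : x2 (iE i) = Z := by rw [hx2]; rw [addTo_ne hiEr]; exact hx1Z
    have hstep2 : step P2 x2 = addTo r (-(c/2) * (W + F)^2) x2 := by
      funext j
      simp only [step, addTo, P2, lin_single, hx2r']
    set x3 := addTo r (-(c/2) * (W + F)^2) x2 with hx3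
    have hx3r' : x3 r' = W + F := by rw [hx3]; rw [addTo_ne hne]; exact hx2r'
    have hx3Z : x3 (iE i) = Z := by rw [hx3]; rw [addTo_ne hiEr]; exact hx2Z
    have hstep3 : step P3 x3 = addTo r (-(c/2) * Z^2) x3 := by
      funext j
      simp only [step, addTo, P3, lin_single, hx3Z]
    set x4 := addTo r (-(c/2) * Z^2) x3 with hx4
    have hx4proj : proj x4 = proj x := by
      rw [hx4, hx3, hx2, hx1]
      rw [proj_addTo hr, proj_addTo hr, proj_addTo hr, proj_addTo hr']
    have hx4r' : x4 r' = W + F := by rw [hx4]; rw [addTo_ne hne]; exact hx3r'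
    have hx4Z : x4 (iE i) = Z := by rw [hx4]; rw [addTo_ne hiEr]; exact hx3Z
    rw [hstep1, hstep2, hstep3]
    simp only [List.nil_append]
    rw [net_append, hL₂, hx4proj]
    set x5 := addTo r' ((-1) * F) x4 with hx5
    have hx5r' : x5 r' = W := by rw [hx5]; simp [hx4r']
    have hx5Z : x5 (iE i) = Z := by rw [hx5]; rw [addTo_ne hiEr']; exact hx4Z
    simp only [net_cons, net_nil]
    have hstep4 : step Q1 x5 = addTo r (-(c/2) * (W + Z)^2) x5 := by
      funext j
      simp only [step, addTo, Q1, lin_pair, hx5r', hx5Z]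
    set x6 := addTo r (-(c/2) * (W + Z)^2) x5 with hx6
    have hx6r' : x6 r' = W := by rw [hx6]; rw [addTo_ne hne]; exact hx5r'
    have hx6Z : x6 (iE i) = Z := by rw [hx6]; rw [addTo_ne hiEr]; exact hx5Z
    have hstep5 : step Q2 x6 = addTo r ((c/2) * W^2) x6 := by
      funext j
      simp only [step, addTo, Q2, lin_single, hx6r']
    set x7 := addTo r ((c/2) * W^2) x6 with hx7
    have hx7Z : x7 (iE i) = Z := by rw [hx7]; rw [addTo_ne hiEr]; exact hx6Z
    have hstep6 : step Q3 x7 = addTo r ((c/2) * Z^2) x7 := by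
      funext j
      simp only [step, addTo, Q3, lin_single, hx7Z]
    rw [hstep4, hstep5, hstep6]
    -- final accounting
    funext j
    have hrr' : ¬ (r = r') := fun h => hne h.symm
    have hpr : proj x i = Z := rfl
    simp only [hx7, hx6, hx5, hx4, hx3, hx2, hx1, addTo, eval_mul, eval_X, hpr, ← hF]
    by_cases hj : j = r
    · simp only [hj, if_pos rfl, if_neg hrr', ite_true, ite_false]
      ring
    · by_cases hj' : j = r'
      · simp [hj, hj', show ¬ (r' = r) from hne]
      · simp [hj, hj']

lemma continuous_lin {n : ℕ} (v : Fin n → 𝕂) (v0 : 𝕂) :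
    Continuous (fun x : Fin n → 𝕂 => lin v v0 x) := by
  unfold lin
  exact (continuous_finset_sum _ (fun i _ => (continuous_const.mul (continuous_apply i)))).add
    continuous_const

lemma continuous_step {n : ℕ} (mv : IMove 𝕂 n) : Continuous (step mv) := by
  apply continuous_pi
  intro j
  by_cases hj : j = mv.r
  · simp only [step, hj, eq_self_iff_true, ite_true]
    exact (continuous_apply mv.r).add
      ((continuous_const.mul ((continuous_lin mv.v mv.v0).pow 2)))
  · simp only [step, hj, ite_false]
    simpa using (continuous_apply j)

/-- One ideal square move can be approximated by a single actual residual block of width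
`m ≥ 3`, uniformly on a compact set. -/
lemma block_approx {n : ℕ} (σf : 𝕂 → 𝕂)
    (a a'' s : 𝕂) (C₀ : ℝ) (hs : s ≠ 0) (hC₀ : 0 ≤ C₀) (ha'' : σf a'' ≠ 0)
    (hest : ∀ w : 𝕂, ‖w‖ ≤ 1 →
      ‖σf (a + w) + σf (a - w) - 2 * σf a - s * w ^ 2‖ ≤ C₀ * ‖w‖ ^ 3)
    (mv : IMove 𝕂 n) (m : ℕ) (hm : 3 ≤ m)
    (C : Set (Fin n → 𝕂)) (hC : IsCompact C) {ε : ℝ} (hε : 0 < ε) :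
    ∃ (A : Matrix (Fin n) (Fin m) 𝕂) (W : Matrix (Fin m) (Fin n) 𝕂) (b : Fin m → 𝕂),
      ∀ x ∈ C, ‖(x + A.mulVec fun i => σf (W.mulVec x i + b i)) - mv.step x‖ ≤ ε := by
  classical
  obtain ⟨M₀, hM₀⟩ := hC.exists_bound_of_continuousOn (continuous_lin mv.v mv.v0).continuousOn
  set M : ℝ := max M₀ 0 + 1 with hM
  have hM1 : 1 ≤ M := by
    have : (0:ℝ) ≤ max M₀ 0 := le_max_right _ _
    linarith
  have hMpos : 0 < M := by linarith
  have hlinM : ∀ x ∈ C, ‖lin mv.v mv.v0 x‖ ≤ M := by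
    intro x hx
    have h1 := hM₀ x hx
    have h2 : M₀ ≤ max M₀ 0 := le_max_left _ _
    linarith
  have hsn : 0 < ‖s‖ := norm_pos_iff.2 hs
  set δ : ℝ := min (1 / M) (ε * ‖s‖ / ((‖mv.c‖ * C₀ + 1) * M ^ 3)) with hδ
  have hδpos : 0 < δ := by
    apply lt_min (by positivity)
    positivity
  set h : 𝕂 := ((δ : ℝ) : 𝕂) with hh
  have hhnorm : ‖h‖ = δ := by rw [hh, RCLike.norm_ofReal, abs_of_pos hδpos]
  have hhne : h ≠ 0 := by
    intro hcon; rw [hcon] at hhnorm; simp at hhnorm; linarith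
  set t : 𝕂 := mv.c / (s * h ^ 2) with ht
  set t' : 𝕂 := -(2 * σf a * t) / σf a'' with ht'
  set i0 : Fin m := ⟨0, by omega⟩ with hi0
  set i1 : Fin m := ⟨1, by omega⟩ with hi1
  set i2 : Fin m := ⟨2, by omega⟩ with hi2
  have h01 : i0 ≠ i1 := by simp [hi0, hi1, Fin.ext_iff]
  have h02 : i0 ≠ i2 := by simp [hi0, hi2, Fin.ext_iff]
  have h12 : i1 ≠ i2 := by simp [hi1, hi2, Fin.ext_iff]
  have hn10 : i1 ≠ i0 := Ne.symm h01
  have hn20 : i2 ≠ i0 := Ne.symm h02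
  have hn21 : i2 ≠ i1 := Ne.symm h12
  set W : Matrix (Fin m) (Fin n) 𝕂 :=
    fun i k => (if i = i0 then h else if i = i1 then -h else 0) * mv.v k with hWd
  set bb : Fin m → 𝕂 := fun i => if i = i0 then a + h * mv.v0 else if i = i1 then a - h * mv.v0
      else if i = i2 then a'' else 0 with hbb
  set A : Matrix (Fin n) (Fin m) 𝕂 := fun j i => if j = mv.r then
      (if i = i0 then t else if i = i1 then t else if i = i2 then t' else 0) else 0 with hA
  refine ⟨A, W, bb, ?_⟩
  intro x hx
  set lam : 𝕂 := lin mv.v mv.v0 x with hlam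
  set y : Fin m → 𝕂 := fun i => σf (W.mulVec x i + bb i) with hy
  have hdot : ∀ cc : 𝕂, ∑ k, (cc * mv.v k) * x k = cc * lam - cc * mv.v0 := by
    intro cc
    rw [hlam]
    unfold lin
    rw [mul_add, Finset.mul_sum]
    rw [Finset.sum_congr rfl (fun k _ => (mul_assoc cc (mv.v k) (x k)))]
    ring
  have hy0 : y i0 = σf (a + h * lam) := by
    simp only [hy, Matrix.mulVec, dotProduct, hWd, hbb, eq_self_iff_true, ite_true]
    congr 1
    rw [hdot h]
    ring
  have hy1 : y i1 = σf (a - h * lam) := by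
    simp only [hy, Matrix.mulVec, dotProduct, hWd, hbb, hn10, ite_false,
      eq_self_iff_true, ite_true]
    congr 1
    rw [hdot (-h)]
    ring
  have hy2 : y i2 = σf a'' := by
    simp only [hy, Matrix.mulVec, dotProduct, hWd, hbb, hn20, hn21, ite_false,
      eq_self_iff_true, ite_true]
    congr 1
    rw [hdot 0]
    ring
  have hAmul : ∀ j, A.mulVec y j = if j = mv.r then t * y i0 + t * y i1 + t' * y i2 else 0 := by
    intro j
    by_cases hj : j = mv.r
    · simp only [Matrix.mulVec, dotProduct, hA, hj, eq_self_iff_true, ite_true]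
      have hsplit : ∀ i : Fin m,
          (if i = i0 then t else if i = i1 then t else if i = i2 then t' else 0) * y i
          = (if i = i0 then t * y i else 0) + ((if i = i1 then t * y i else 0)
            + (if i = i2 then t' * y i else 0)) := by
        intro i
        by_cases e0 : i = i0
        · subst e0; simp [h01, h02]
        · by_cases e1 : i = i1
          · subst e1; simp [e0, h12]
          · by_cases e2 : i = i2
            · subst e2; simp [e0, e1]
            · simp [e0, e1, e2]
      rw [Finset.sum_congr rfl (fun i _ => hsplit i)]
      rw [Finset.sum_add_distrib, Finset.sum_add_distrib]
      rw [Finset.sum_ite_eq' univ i0 (fun i => t * y i),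
        Finset.sum_ite_eq' univ i1 (fun i => t * y i),
        Finset.sum_ite_eq' univ i2 (fun i => t' * y i)]
      simp [add_assoc]
    · simp only [Matrix.mulVec, dotProduct, hA, hj, ite_false]
      simp
  -- the error term
  have hts : t * s * h ^ 2 = mv.c := by
    rw [ht]
    field_simp
  have ht's : t' * σf a'' = -(2 * σf a * t) := by
    rw [ht']
    field_simp
  have htn : ‖t‖ = ‖mv.c‖ / (‖s‖ * δ ^ 2) := by
    rw [ht, norm_div, norm_mul, norm_pow, hhnorm]
  clear_value t t' h lam
  have herr : t * y i0 + t * y i1 + t' * y i2 - mv.c * lam ^ 2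
      = t * (σf (a + h * lam) + σf (a - h * lam) - 2 * σf a - s * (h * lam) ^ 2) := by
    rw [hy0, hy1, hy2, ht's, ← hts]
    ring
  have hw1 : ‖h * lam‖ ≤ 1 := by
    rw [norm_mul, hhnorm]
    have h1 : ‖lam‖ ≤ M := by rw [hlam]; exact hlinM x hx
    have h2 : δ ≤ 1 / M := min_le_left _ _
    calc δ * ‖lam‖ ≤ (1 / M) * M := by
          apply mul_le_mul h2 h1 (norm_nonneg _) (by positivity)
      _ = 1 := by field_simp
  have hkey : ‖t * y i0 + t * y i1 + t' * y i2 - mv.c * lam ^ 2‖ ≤ ε := by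
    rw [herr, norm_mul]
    have h1 := hest (h * lam) hw1
    have h2 : ‖h * lam‖ ^ 3 ≤ δ ^ 3 * M ^ 3 := by
      rw [norm_mul, hhnorm]
      have h3 : ‖lam‖ ≤ M := by rw [hlam]; exact hlinM x hx
      calc (δ * ‖lam‖) ^ 3 = δ ^ 3 * ‖lam‖ ^ 3 := by ring
        _ ≤ δ ^ 3 * M ^ 3 := by
            apply mul_le_mul_of_nonneg_left (pow_le_pow_left₀ (norm_nonneg _) h3 3)
              (by positivity)
    calc ‖t‖ * ‖σf (a + h * lam) + σf (a - h * lam) - 2 * σf a - s * (h * lam) ^ 2‖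
        ≤ ‖t‖ * (C₀ * ‖h * lam‖ ^ 3) := by
          apply mul_le_mul_of_nonneg_left h1 (norm_nonneg _)
      _ ≤ (‖mv.c‖ / (‖s‖ * δ ^ 2)) * (C₀ * (δ ^ 3 * M ^ 3)) := by
          rw [htn]
          apply mul_le_mul_of_nonneg_left
            (mul_le_mul_of_nonneg_left h2 hC₀) (by positivity)
      _ = (‖mv.c‖ * C₀ * M ^ 3 / ‖s‖) * δ := by field_simp
      _ ≤ (‖mv.c‖ * C₀ * M ^ 3 / ‖s‖) * (ε * ‖s‖ / ((‖mv.c‖ * C₀ + 1) * M ^ 3)) := by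
          apply mul_le_mul_of_nonneg_left (min_le_right _ _) (by positivity)
      _ = ε * ((‖mv.c‖ * C₀) / (‖mv.c‖ * C₀ + 1)) := by
          field_simp
      _ ≤ ε * 1 := by
          apply mul_le_mul_of_nonneg_left _ (le_of_lt hε)
          rw [div_le_one (by positivity)]
          linarith
      _ = ε := mul_one ε
  -- put the coordinates together
  rw [pi_norm_le_iff_of_nonneg (le_of_lt hε)]
  intro j
  by_cases hj : j = mv.r
  · subst hj
    have heq : ((x + A.mulVec y) - mv.step x) mv.r
        = t * y i0 + t * y i1 + t' * y i2 - mv.c * lam ^ 2 := by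
      simp only [Pi.sub_apply, Pi.add_apply, step, hAmul mv.r, eq_self_iff_true, ite_true]
      rw [← hlam]
      ring
    rw [heq]
    exact hkey
  · have heq : ((x + A.mulVec y) - mv.step x) j = 0 := by
      simp only [Pi.sub_apply, Pi.add_apply, step, hAmul j, hj, ite_false]
      ring
    rw [heq, norm_zero]
    exact le_of_lt hε

lemma continuous_net {n : ℕ} (L : List (IMove 𝕂 n)) : Continuous (net L) := by
  induction L with
  | nil => exact continuous_id
  | cons mv L ih =>
    have : net (mv :: L) = fun x => net L (step mv x) := rfl
    rw [this]
    exact ih.comp (continuous_step mv)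

/-- Approximating an ideal network by an actual residual-block network. -/
lemma net_approx {n : ℕ} (σf : 𝕂 → 𝕂)
    (a a'' s : 𝕂) (C₀ : ℝ) (hs : s ≠ 0) (hC₀ : 0 ≤ C₀) (ha'' : σf a'' ≠ 0)
    (hest : ∀ w : 𝕂, ‖w‖ ≤ 1 →
      ‖σf (a + w) + σf (a - w) - 2 * σf a - s * w ^ 2‖ ≤ C₀ * ‖w‖ ^ 3)
    (m : ℕ) (hm : 3 ≤ m) :
    ∀ (L : List (IMove 𝕂 n)) (C : Set (Fin n → 𝕂)), IsCompact C → ∀ {ε : ℝ}, 0 < ε →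
    ∃ g ∈ ResBlocks σf n (List.replicate L.length m),
      ∀ x ∈ C, ‖g x - net L x‖ ≤ ε := by
  intro L
  induction L with
  | nil =>
    intro C hC ε hε
    refine ⟨id, by simp [ResBlocks, List.replicate], fun x hx => ?_⟩
    simp [net]
    linarith
  | cons mv L ih =>
    intro C hC ε hε
    set K1 := step mv '' C with hK1def
    have hK1 : IsCompact K1 := hC.image (continuous_step mv)
    set C' := Metric.cthickening 1 K1 with hC'def
    have hC' : IsCompact C' := hK1.cthickening
    obtain ⟨g, hgmem, hg⟩ := ih C' hC' (half_pos hε)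
    have huc := Metric.uniformContinuousOn_iff.1
      (hC'.uniformContinuousOn_of_continuous (continuous_net L).continuousOn)
      (ε/2) (half_pos hε)
    obtain ⟨δ, hδpos, hδ⟩ := huc
    have hε' : 0 < min (δ/2) 1 := lt_min (half_pos hδpos) one_pos
    obtain ⟨A, W, b, hblock⟩ := block_approx σf a a'' s C₀ hs hC₀ ha'' hest mv m hm C hC hε'
    refine ⟨fun x => g (x + A.mulVec fun i => σf (W.mulVec x i + b i)), ?_, ?_⟩
    · rw [List.length_cons, List.replicate_succ]
      exact ⟨A, W, b, g, hgmem, rfl⟩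
    · intro x hx
      set Bx := x + A.mulVec fun i => σf (W.mulVec x i + b i) with hBx
      have hd : ‖Bx - step mv x‖ ≤ min (δ/2) 1 := hblock x hx
      have hstepmem : step mv x ∈ C' :=
        Metric.self_subset_cthickening K1 (Set.mem_image_of_mem _ hx)
      have hBxmem : Bx ∈ C' :=
        Metric.mem_cthickening_of_dist_le Bx (step mv x) 1 K1
          (Set.mem_image_of_mem _ hx) (by rw [dist_eq_norm]; exact hd.trans (min_le_right _ _))
      have h1 : ‖g Bx - net L Bx‖ ≤ ε/2 := hg Bx hBxmem
      have h2 : ‖net L Bx - net L (step mv x)‖ ≤ ε/2 := by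
        have := hδ Bx hBxmem (step mv x) hstepmem
          (by rw [dist_eq_norm]
              calc ‖Bx - step mv x‖ ≤ min (δ/2) 1 := hd
                _ ≤ δ/2 := min_le_left _ _
                _ < δ := by linarith)
        rw [dist_eq_norm] at this
        linarith
      have hnet : net (mv :: L) x = net L (step mv x) := rfl
      rw [hnet]
      calc ‖g Bx - net L (step mv x)‖
          = ‖(g Bx - net L Bx) + (net L Bx - net L (step mv x))‖ := by ring_nf
        _ ≤ ‖g Bx - net L Bx‖ + ‖net L Bx - net L (step mv x)‖ := norm_add_le _ _
        _ ≤ ε/2 + ε/2 := add_le_add h1 h2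
        _ = ε := by ring

lemma myeval_bind {n : ℕ} (f : Fin n → MvPolynomial (Fin n) 𝕂) (p : MvPolynomial (Fin n) 𝕂)
    (x : Fin n → 𝕂) :
    eval x (bind₁ f p) = eval (fun i => eval x (f i)) p := by
  have h := MvPolynomial.eval₂Hom_bind₁ (RingHom.id 𝕂) x f p
  exact h

lemma continuous_block {n D : ℕ} (σf : 𝕂 → 𝕂) (hσc : Continuous σf)
    (A : Matrix (Fin n) (Fin D) 𝕂) (W : Matrix (Fin D) (Fin n) 𝕂) (b : Fin D → 𝕂) :
    Continuous (fun z : Fin n → 𝕂 => z + A.mulVec fun i => σf (W.mulVec z i + b i)) := by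
  apply Continuous.add continuous_id
  apply continuous_pi
  intro j
  simp only [Matrix.mulVec, dotProduct]
  apply continuous_finset_sum
  intro i _
  apply Continuous.mul continuous_const
  apply hσc.comp
  apply Continuous.add _ continuous_const
  exact continuous_finset_sum _ (fun k _ => continuous_const.mul (continuous_apply k))

lemma blocks_continuous {n : ℕ} (σf : 𝕂 → 𝕂) (hσc : Continuous σf) :
    ∀ (Ds : List ℕ) (h : (Fin n → 𝕂) → (Fin n → 𝕂)), h ∈ ResBlocks σf n Ds → Continuous h := by
  intro Ds
  induction Ds with
  | nil => intro h hh; rw [show h = id from hh]; exact continuous_id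
  | cons D Ds ih =>
    rintro h ⟨A, W, b, g, hg, rfl⟩
    exact (ih g hg).comp (continuous_block σf hσc A W b)

/-- Every residual-block map is uniformly approximated by polynomial maps on compacts. -/
lemma blocks_polyapprox {n : ℕ} (α : ℕ → 𝕂) (σf : 𝕂 → 𝕂)
    (hσ : ∀ z : 𝕂, HasSum (fun k : ℕ => α k * z ^ k) (σf z)) (hσc : Continuous σf) :
    ∀ (Ds : List ℕ) (h : (Fin n → 𝕂) → (Fin n → 𝕂)), h ∈ ResBlocks σf n Ds →
    ∀ (C : Set (Fin n → 𝕂)), IsCompact C → ∀ {ε : ℝ}, 0 < ε →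
    ∃ P : Fin n → MvPolynomial (Fin n) 𝕂,
      ∀ x ∈ C, ‖h x - (fun j => eval x (P j))‖ ≤ ε := by
  intro Ds
  induction Ds with
  | nil =>
    intro h hh C hC ε hε
    refine ⟨fun j => X j, fun x hx => ?_⟩
    rw [show h = id from hh]
    have : (id x - fun j => eval x (X j)) = (0 : Fin n → 𝕂) := by
      funext j; simp
    rw [this, norm_zero]
    linarith
  | cons D Ds ih =>
    rintro h ⟨A, W, b, g, hg, rfl⟩ C hC ε hε
    set B : (Fin n → 𝕂) → (Fin n → 𝕂) :=
      fun z => z + A.mulVec fun i => σf (W.mulVec z i + b i) with hB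
    have hBc : Continuous B := continuous_block σf hσc A W b
    set K1 := B '' C with hK1def
    have hK1 : IsCompact K1 := hC.image hBc
    set C' := Metric.cthickening 1 K1 with hC'def
    have hC' : IsCompact C' := hK1.cthickening
    obtain ⟨Pg, hPg⟩ := ih g hg C' hC' (half_pos hε)
    have hPgc : Continuous (fun y : Fin n → 𝕂 => (fun j => eval y (Pg j))) :=
      continuous_pi (fun j => MvPolynomial.continuous_eval (Pg j))
    obtain ⟨δ, hδpos, hδ⟩ := Metric.uniformContinuousOn_iff.1
      (hC'.uniformContinuousOn_of_continuous hPgc.continuousOn) (ε/2) (half_pos hε)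
    -- bound on inner affine values over C
    have hWc : Continuous (fun z : Fin n → 𝕂 => (fun i : Fin D => W.mulVec z i + b i)) := by
      apply continuous_pi
      intro i
      simp only [Matrix.mulVec, dotProduct]
      exact (continuous_finset_sum _ (fun k _ => continuous_const.mul (continuous_apply k))).add
        continuous_const
    obtain ⟨R₀, hR₀⟩ := hC.exists_bound_of_continuousOn hWc.continuousOn
    set R := max R₀ 0 with hR
    have hR0 : 0 ≤ R := le_max_right _ _
    have hRb : ∀ z ∈ C, ∀ i, ‖W.mulVec z i + b i‖ ≤ R := by
      intro z hz i
      calc ‖W.mulVec z i + b i‖ ≤ ‖fun i : Fin D => W.mulVec z i + b i‖ :=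
            norm_le_pi_norm (fun i : Fin D => W.mulVec z i + b i) i
        _ ≤ R₀ := hR₀ z hz
        _ ≤ R := le_max_left _ _
    -- constant controlling A
    set CA : ℝ := (∑ j, ∑ i, ‖A j i‖) + 1 with hCA
    have hCA0 : 0 < CA := by
      have : 0 ≤ ∑ j, ∑ i, ‖A j i‖ :=
        Finset.sum_nonneg (fun j _ => Finset.sum_nonneg (fun i _ => norm_nonneg _))
      linarith
    have hCAj : ∀ j : Fin n, ∑ i, ‖A j i‖ ≤ CA := by
      intro j
      have h1 : ∑ i, ‖A j i‖ ≤ ∑ j, ∑ i, ‖A j i‖ :=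
        Finset.single_le_sum (f := fun j => ∑ i, ‖A j i‖)
          (fun j _ => Finset.sum_nonneg (fun i _ => norm_nonneg _)) (Finset.mem_univ j)
      linarith
    set εB : ℝ := min δ 1 / 2 with hεB
    have hεBpos : 0 < εB := by
      apply div_pos (lt_min hδpos one_pos) two_pos
    obtain ⟨N, hN⟩ := tail_est α σf hσ R hR0 (ε := εB / CA) (by positivity)
    -- the polynomial approximating B
    set linW : Fin D → MvPolynomial (Fin n) 𝕂 :=
      fun i => (∑ k, MvPolynomial.C (W i k) * X k) + MvPolynomial.C (b i) with hlinW
    set Strunc : Fin D → MvPolynomial (Fin n) 𝕂 :=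
      fun i => ∑ k ∈ Finset.range N, MvPolynomial.C (α k) * (linW i) ^ k with hStrunc
    set Q : Fin n → MvPolynomial (Fin n) 𝕂 :=
      fun j => X j + ∑ i, MvPolynomial.C (A j i) * Strunc i with hQ
    have hlinWeval : ∀ (x : Fin n → 𝕂) (i : Fin D), eval x (linW i) = W.mulVec x i + b i := by
      intro x i
      rw [hlinW]
      simp only [map_add, map_sum, map_mul, eval_C, eval_X]
      rfl
    have hQeval : ∀ (x : Fin n → 𝕂) (j : Fin n),
        eval x (Q j) = x j + ∑ i, A j i * (∑ k ∈ Finset.range N, α k * (W.mulVec x i + b i) ^ k) := by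
      intro x j
      rw [hQ]
      simp only [map_add, map_sum, map_mul, map_pow, eval_C, eval_X, hStrunc, hlinWeval]
    -- B is approximated by eval Q within min δ 1 on C
    have hQB : ∀ x ∈ C, ∀ j, ‖B x j - eval x (Q j)‖ ≤ εB := by
      intro x hx j
      rw [hQeval, hB]
      have heq : (x + A.mulVec fun i => σf (W.mulVec x i + b i)) j
          - (x j + ∑ i, A j i * (∑ k ∈ Finset.range N, α k * (W.mulVec x i + b i) ^ k))
          = ∑ i, A j i * (σf (W.mulVec x i + b i)
            - ∑ k ∈ Finset.range N, α k * (W.mulVec x i + b i) ^ k) := by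
        simp only [Pi.add_apply, Matrix.mulVec, dotProduct]
        rw [Finset.sum_congr rfl (fun i _ => mul_sub (A j i) _ _), Finset.sum_sub_distrib]
        ring
      rw [heq]
      calc ‖∑ i, A j i * (σf (W.mulVec x i + b i)
            - ∑ k ∈ Finset.range N, α k * (W.mulVec x i + b i) ^ k)‖
          ≤ ∑ i, ‖A j i * (σf (W.mulVec x i + b i)
            - ∑ k ∈ Finset.range N, α k * (W.mulVec x i + b i) ^ k)‖ := norm_sum_le _ _
        _ ≤ ∑ i, ‖A j i‖ * (εB / CA) := by
            apply Finset.sum_le_sum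
            intro i _
            rw [norm_mul]
            exact mul_le_mul_of_nonneg_left (hN _ (hRb x hx i)) (norm_nonneg _)
        _ = (∑ i, ‖A j i‖) * (εB / CA) := by rw [← Finset.sum_mul]
        _ ≤ CA * (εB / CA) := by
            apply mul_le_mul_of_nonneg_right (hCAj j) (by positivity)
        _ = εB := by field_simp
    -- assemble
    refine ⟨fun j => bind₁ Q (Pg j), fun x hx => ?_⟩
    have hQx : (fun j => eval x (bind₁ Q (Pg j))) = fun j => eval (fun i => eval x (Q i)) (Pg j) := by
      funext j
      rw [myeval_bind]
    rw [hQx]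
    set y : Fin n → 𝕂 := fun i => eval x (Q i) with hy
    have hBmem : B x ∈ C' := Metric.self_subset_cthickening K1 (Set.mem_image_of_mem _ hx)
    have hdisty : dist y (B x) ≤ εB := by
      rw [dist_eq_norm]
      rw [pi_norm_le_iff_of_nonneg (le_of_lt hεBpos)]
      intro j
      have := hQB x hx j
      rw [show (y - B x) j = -(B x j - eval x (Q j)) by simp only [Pi.sub_apply, hy]; ring]
      rw [norm_neg]
      exact this
    have hymem : y ∈ C' := by
      refine Metric.mem_cthickening_of_dist_le y (B x) 1 K1 (Set.mem_image_of_mem _ hx)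
        (le_trans hdisty ?_)
      rw [hεB]
      have h1 := min_le_right δ 1
      have h2 := lt_min hδpos one_pos
      linarith
    have h1 : ‖g (B x) - (fun j => eval (B x) (Pg j))‖ ≤ ε/2 := hPg (B x) hBmem
    have h2 : ‖(fun j => eval (B x) (Pg j)) - (fun j => eval y (Pg j))‖ ≤ ε/2 := by
      have := hδ (B x) hBmem y hymem (by
        rw [dist_comm]
        calc dist y (B x) ≤ εB := hdisty
          _ < δ := by
              rw [hεB]
              have h1 := min_le_left δ 1
              have h2 := lt_min hδpos one_pos
              linarith)
      rw [dist_eq_norm] at this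
      exact le_of_lt this
    calc ‖g (B x) - fun j => eval y (Pg j)‖
        = ‖(g (B x) - fun j => eval (B x) (Pg j))
          + ((fun j => eval (B x) (Pg j)) - fun j => eval y (Pg j))‖ := by
          rw [sub_add_sub_cancel]
      _ ≤ ‖g (B x) - fun j => eval (B x) (Pg j)‖
          + ‖(fun j => eval (B x) (Pg j)) - fun j => eval y (Pg j)‖ := norm_add_le _ _
      _ ≤ ε/2 + ε/2 := add_le_add h1 h2
      _ = ε := by ring

lemma continuous_affine {n d : ℕ} (A0 : Matrix (Fin n) (Fin d) 𝕂) (b0 : Fin n → 𝕂) :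
    Continuous (fun z : Fin d → 𝕂 => A0.mulVec z + b0) := by
  apply Continuous.add _ continuous_const
  apply continuous_pi
  intro j
  simp only [Matrix.mulVec, dotProduct]
  exact continuous_finset_sum _ (fun k _ => continuous_const.mul (continuous_apply k))

/-- For `σ` entire and not affine-linear (some coefficient `α_k ≠ 0` with `k ≥ 2`) and
`U ⊆ 𝕂^d` open and bounded, for every fixed `m ≥ 4` the closure in `C⁰(Ū, 𝕂)` of
`Ñ₂ = ⋃_L R_{L,σ}(d+2, m, …, m)` equals the closure of the polynomials on `𝕂^d`. -/

theorem resNet_nonaffine_closure {𝕂 : Type} [RCLike 𝕂] (d : ℕ) (hd : 1 ≤ d)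
    (σ : 𝕂 → 𝕂) (α : ℕ → 𝕂) (hσ : ∀ z : 𝕂, HasSum (fun k : ℕ => α k * z ^ k) (σ z))
    (hna : ∃ k : ℕ, 2 ≤ k ∧ α k ≠ 0)
    (U : Set (Fin d → 𝕂)) (hU : IsOpen U) (hUb : Bornology.IsBounded U)
    (m : ℕ) (hm : 4 ≤ m) :
    closure (restrictSet
        (⋃ (L : ℕ) (_ : 1 ≤ L), ResNet σ d (d + 2) (List.replicate (L - 1) m))
        (closure U)) =
      closure (restrictSet (PolyFuns 𝕂 d) (closure U)) := by
  classical
  set K : Set (Fin d → 𝕂) := closure U with hKdef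
  have hK : IsCompact K :=
    Metric.isCompact_of_isClosed_isBounded isClosed_closure hUb.closure
  haveI : CompactSpace ↥K := isCompact_iff_compactSpace.1 hK
  have hσc : Continuous σ := cont_of_hasSum α σ hσ
  have hm3 : 3 ≤ m := by omega
  -- σ is not identically zero
  have hσnz : ∃ a'' : 𝕂, σ a'' ≠ 0 := by
    by_contra hcon
    push_neg at hcon
    have hzero : ∀ z : 𝕂, HasSum (fun k => α k * z ^ k) 0 := by
      intro z
      have := hσ z
      rwa [hcon z] at this
    have := coeff_zero_of_hasSum_zero α (sum_norm_of_hasSum α σ hσ) hzero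
    obtain ⟨k, _, hk⟩ := hna
    exact hk (this k)
  obtain ⟨a'', ha''⟩ := hσnz
  obtain ⟨a, s, C₀, hs, hC₀, hest⟩ := exists_second_order α σ hσ hna
  -- direction A : resnets are in the closure of polynomials
  have hA : restrictSet
      (⋃ (L : ℕ) (_ : 1 ≤ L), ResNet σ d (d + 2) (List.replicate (L - 1) m)) K
      ⊆ closure (restrictSet (PolyFuns 𝕂 d) K) := by
    rintro g ⟨f, hf, hgf⟩
    rw [Set.mem_iUnion] at hf
    obtain ⟨L, hf⟩ := hf
    rw [Set.mem_iUnion] at hf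
    obtain ⟨hL1, hf⟩ := hf
    obtain ⟨A0, b0, AL, hblk, hhmem, rfl⟩ := hf
    rw [Metric.mem_closure_iff]
    intro ε hε
    set Cimg := (fun z : Fin d → 𝕂 => A0.mulVec z + b0) '' K with hCimg
    have hCimgK : IsCompact Cimg := hK.image (continuous_affine A0 b0)
    set SA : ℝ := (∑ i, ‖AL i‖) + 1 with hSA
    have hSA0 : 0 < SA := by
      have : 0 ≤ ∑ i, ‖AL i‖ := Finset.sum_nonneg (fun i _ => norm_nonneg _)
      linarith
    obtain ⟨P, hP⟩ := blocks_polyapprox α σ hσ hσc _ hblk hhmem Cimg hCimgK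
      (ε := ε / (2 * SA)) (by positivity)
    set affQ : Fin (d+2) → MvPolynomial (Fin d) 𝕂 :=
      fun k => (∑ j, MvPolynomial.C (A0 k j) * X j) + MvPolynomial.C (b0 k) with haffQ
    have haffQeval : ∀ (z : Fin d → 𝕂), (fun k => eval z (affQ k)) = A0.mulVec z + b0 := by
      intro z
      funext k
      rw [haffQ]
      simp only [map_add, map_sum, map_mul, eval_C, eval_X]
      rfl
    set q : MvPolynomial (Fin d) 𝕂 :=
      ∑ i, MvPolynomial.C (AL i) * MvPolynomial.bind₁ affQ (P i) with hq
    have hqeval : ∀ z : Fin d → 𝕂,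
        eval z q = ∑ i, AL i * eval (A0.mulVec z + b0) (P i) := by
      intro z
      rw [hq]
      rw [map_sum]
      apply Finset.sum_congr rfl
      intro i _
      rw [map_mul, eval_C]
      congr 1
      have hb := MvPolynomial.eval₂Hom_bind₁ (RingHom.id 𝕂) z affQ (P i)
      have hb2 : eval z (MvPolynomial.bind₁ affQ (P i))
          = eval (fun k => eval z (affQ k)) (P i) := hb
      rw [hb2, haffQeval]
    have hfq : ∀ z ∈ K, ‖(∑ i, AL i * hblk (A0.mulVec z + b0) i) - eval z q‖ ≤ ε / 2 := by
      intro z hz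
      rw [hqeval]
      set y := A0.mulVec z + b0 with hy
      have hymem : y ∈ Cimg := Set.mem_image_of_mem _ hz
      have hcoord : ∀ i, ‖hblk y i - eval y (P i)‖ ≤ ε / (2 * SA) := by
        intro i
        calc ‖hblk y i - eval y (P i)‖
            = ‖(hblk y - fun j => eval y (P j)) i‖ := by simp
          _ ≤ ‖hblk y - fun j => eval y (P j)‖ :=
              norm_le_pi_norm (hblk y - fun j => eval y (P j)) i
          _ ≤ ε / (2 * SA) := hP y hymem
      calc ‖(∑ i, AL i * hblk y i) - ∑ i, AL i * eval y (P i)‖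
          = ‖∑ i, AL i * (hblk y i - eval y (P i))‖ := by
            rw [← Finset.sum_sub_distrib]
            congr 1
            apply Finset.sum_congr rfl
            intro i _
            ring
        _ ≤ ∑ i, ‖AL i * (hblk y i - eval y (P i))‖ := norm_sum_le _ _
        _ ≤ ∑ i, ‖AL i‖ * (ε / (2 * SA)) := by
            apply Finset.sum_le_sum
            intro i _
            rw [norm_mul]
            exact mul_le_mul_of_nonneg_left (hcoord i) (norm_nonneg _)
        _ = (∑ i, ‖AL i‖) * (ε / (2 * SA)) := by rw [← Finset.sum_mul]
        _ ≤ SA * (ε / (2 * SA)) := by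
            apply mul_le_mul_of_nonneg_right _ (by positivity)
            rw [hSA]; linarith
        _ = ε / 2 := by field_simp
    set gq : C(↥K, 𝕂) := ⟨fun z : K => eval (z : Fin d → 𝕂) q,
      (MvPolynomial.continuous_eval q).comp continuous_subtype_val⟩ with hgq
    refine ⟨gq, ⟨fun z => eval z q, ⟨q, rfl⟩, fun z => rfl⟩, ?_⟩
    have hdle : dist g gq ≤ ε / 2 := by
      rw [ContinuousMap.dist_le (by positivity)]
      intro z
      rw [hgf z]
      have h9 := hfq (z : Fin d → 𝕂) z.2
      rw [dist_eq_norm]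
      exact h9
    calc dist g gq ≤ ε / 2 := hdle
      _ < ε := by linarith
  -- direction B : polynomials are in the closure of resnets
  have hB : restrictSet (PolyFuns 𝕂 d) K
      ⊆ closure (restrictSet
        (⋃ (L : ℕ) (_ : 1 ≤ L), ResNet σ d (d + 2) (List.replicate (L - 1) m)) K) := by
    rintro g ⟨f, ⟨p, rfl⟩, hgf⟩
    rw [Metric.mem_closure_iff]
    intro ε hε
    set sIdx : Fin (d + 2) := ⟨d + 1, by omega⟩ with hsIdx
    obtain ⟨Lmv, hLmv⟩ := ideal_rep p 1 sIdx (by simp [hsIdx])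
    set A0 : Matrix (Fin (d+2)) (Fin d) 𝕂 := fun j k => if j = iE k then 1 else 0 with hA0
    set b0 : Fin (d+2) → 𝕂 := 0 with hb0
    set Cimg := (fun z : Fin d → 𝕂 => A0.mulVec z + b0) '' K with hCimg
    have hCimgK : IsCompact Cimg := hK.image (continuous_affine A0 b0)
    obtain ⟨gblk, hgmem, hgb⟩ := net_approx σ a a'' s C₀ hs hC₀ ha'' hest m hm3 Lmv
      Cimg hCimgK (half_pos hε)
    set AL : Fin (d+2) → 𝕂 := fun i => if i = sIdx then 1 else 0 with hAL
    set F : (Fin d → 𝕂) → 𝕂 := fun z => ∑ i, AL i * gblk (A0.mulVec z + b0) i with hF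
    have hgc : Continuous gblk := blocks_continuous σ hσc _ gblk hgmem
    have hFc : Continuous F := by
      rw [hF]
      apply continuous_finset_sum
      intro i _
      exact continuous_const.mul ((continuous_apply i).comp
        (hgc.comp (continuous_affine A0 b0)))
    -- key facts about the embedding
    have hiEne : ∀ k : Fin d, sIdx ≠ iE k := by
      intro k
      intro hcon
      have h1 : ((sIdx : Fin (d+2)) : ℕ) = d + 1 := rfl
      have h2 : ((iE k : Fin (d+2)) : ℕ) = (k : ℕ) := rfl
      rw [hcon] at h1
      rw [h2] at h1
      have := k.isLt
      omega
    have hy0 : ∀ z : Fin d → 𝕂, (A0.mulVec z + b0) sIdx = 0 := by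
      intro z
      simp only [Pi.add_apply, hb0, Pi.zero_apply, add_zero, Matrix.mulVec,
        dotProduct, hA0]
      apply Finset.sum_eq_zero
      intro k _
      rw [if_neg (hiEne k)]
      ring
    have hproj : ∀ z : Fin d → 𝕂, proj (A0.mulVec z + b0) = z := by
      intro z
      funext i
      simp only [proj, Pi.add_apply, hb0, Pi.zero_apply, add_zero, Matrix.mulVec,
        dotProduct, hA0]
      have hiff : ∀ k : Fin d, (iE i = iE k) ↔ (k = i) := by
        intro k
        constructor
        · intro h
          have : (i : ℕ) = (k : ℕ) := congrArg (fun z : Fin (d+2) => (z : ℕ)) h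
          exact Fin.ext this.symm
        · intro h; rw [h]
      rw [Finset.sum_congr rfl (fun k _ => by
        rw [show (if iE i = iE k then (1:𝕂) else 0) * z k
          = (if k = i then z k else 0) from by
            by_cases h : iE i = iE k
            · rw [if_pos h, if_pos ((hiff k).1 h), one_mul]
            · rw [if_neg h, if_neg (fun hc => h ((hiff k).2 hc)), zero_mul]])]
      rw [Finset.sum_ite_eq' Finset.univ i z]
      simp
    have hFval : ∀ z ∈ K, ‖F z - eval z p‖ ≤ ε / 2 := by
      intro z hz
      have hFz : F z = gblk (A0.mulVec z + b0) sIdx := by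
        simp only [hF, hAL]
        rw [Finset.sum_congr rfl (fun i _ =>
          show (if i = sIdx then (1:𝕂) else 0) * gblk (A0.mulVec z + b0) i
            = (if i = sIdx then gblk (A0.mulVec z + b0) i else 0) from by
              by_cases h : i = sIdx
              · rw [if_pos h, if_pos h, one_mul]
              · rw [if_neg h, if_neg h, zero_mul])]
        rw [Finset.sum_ite_eq' Finset.univ sIdx]
        simp
      have hnet : net Lmv (A0.mulVec z + b0) sIdx = eval z p := by
        rw [hLmv]
        simp only [addTo, eq_self_iff_true, if_true, ite_true]
        rw [hy0 z, hproj z]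
        ring
      rw [hFz, ← hnet]
      have hmem : (A0.mulVec z + b0) ∈ Cimg := Set.mem_image_of_mem _ hz
      calc ‖gblk (A0.mulVec z + b0) sIdx - net Lmv (A0.mulVec z + b0) sIdx‖
          = ‖(gblk (A0.mulVec z + b0) - net Lmv (A0.mulVec z + b0)) sIdx‖ := by simp
        _ ≤ ‖gblk (A0.mulVec z + b0) - net Lmv (A0.mulVec z + b0)‖ :=
            norm_le_pi_norm _ sIdx
        _ ≤ ε / 2 := hgb _ hmem
    set gF : C(↥K, 𝕂) := ⟨fun z : K => F (z : Fin d → 𝕂),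
      hFc.comp continuous_subtype_val⟩ with hgF
    refine ⟨gF, ⟨F, ?_, fun z => rfl⟩, ?_⟩
    · rw [Set.mem_iUnion]
      refine ⟨Lmv.length + 1, ?_⟩
      rw [Set.mem_iUnion]
      refine ⟨by omega, ?_⟩
      have hlen : Lmv.length + 1 - 1 = Lmv.length := by omega
      rw [hlen]
      exact ⟨A0, b0, AL, gblk, hgmem, rfl⟩
    · have hdle : dist g gF ≤ ε / 2 := by
        rw [ContinuousMap.dist_le (by positivity)]
        intro z
        rw [hgf z, dist_eq_norm]
        have h9 := hFval (z : Fin d → 𝕂) z.2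
        rw [norm_sub_rev]
        exact h9
      calc dist g gF ≤ ε / 2 := hdle
        _ < ε := by linarith
  exact subset_antisymm (closure_minimal hA isClosed_closure)
    (closure_minimal hB isClosed_closure)


end Aux
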